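/- Let v_1, …, v_p ∈ ℝ^m be unit-norm vectors such that |⟨v_i, v_j⟩| ≤ μ for all i ≠ j, and suppose (p − 1) μ < 1. Then v_1, …, v_p are linearly independent. -/

import Mathlib

open Finset

/-- Unit-norm vectors with pairwise coherence μ satisfying (p - 1) μ < 1 are
linearly independent. -/
theorem stmt_8 (m p : ℕ) (v : Fin p → Fin m → ℝ) (μ : ℝ)
    (hunit : ∀ i : Fin p, ∑ k, (v i k) ^ 2 = 1)
    (hcoh : ∀ i j : Fin p, i ≠ j → |∑ k, v i k * v j k| ≤ μ)
    (hμ : ((p : ℝ) - 1) * μ < 1) :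
    LinearIndependent ℝ v := by
  rw [Fintype.linearIndependent_iff]
  intro g hg
  -- pick index with maximal |g|
  by_contra hne
  push_neg at hne
  obtain ⟨i0, hi0⟩ := hne
  have hpne : (Finset.univ : Finset (Fin p)).Nonempty := ⟨i0, mem_univ i0⟩
  obtain ⟨j, _, hj⟩ := Finset.exists_max_image univ (fun i => |g i|) hpne
  have hjpos : 0 < |g j| := lt_of_lt_of_le (abs_pos.mpr hi0) (hj i0 (mem_univ i0))
  -- inner product of the relation with v j
  have hk : ∀ k, ∑ i, g i * v i k = 0 := by
    intro k
    have := congrFun hg k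
    simpa [Finset.sum_apply] using this
  have key : ∑ i, g i * (∑ k, v i k * v j k) = 0 := by
    have h0 : ∑ k, (∑ i, g i * v i k) * v j k = 0 := by
      simp [hk]
    calc ∑ i, g i * (∑ k, v i k * v j k)
        = ∑ i, ∑ k, g i * (v i k * v j k) := by simp [Finset.mul_sum]
      _ = ∑ k, ∑ i, g i * (v i k * v j k) := Finset.sum_comm
      _ = ∑ k, (∑ i, g i * v i k) * v j k := by
          refine Finset.sum_congr rfl fun k _ => ?_
          rw [Finset.sum_mul]; exact Finset.sum_congr rfl fun i _ => by ring
      _ = 0 := h0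
  have hdiag : ∑ k, v j k * v j k = 1 := by
    have := hunit j
    simpa [pow_two] using this
  have hsplit : g j + ∑ i ∈ univ.erase j, g i * (∑ k, v i k * v j k) = 0 := by
    have := key
    rw [← Finset.add_sum_erase univ _ (mem_univ j)] at this
    simpa [hdiag] using this
  have habs : |g j| ≤ ∑ i ∈ univ.erase j, |g j| * μ := by
    have h1 : |g j| = |∑ i ∈ univ.erase j, g i * (∑ k, v i k * v j k)| := by
      have : g j = -(∑ i ∈ univ.erase j, g i * (∑ k, v i k * v j k)) := by linarith
      rw [this, abs_neg]
    refine h1.trans_le (le_trans (Finset.abs_sum_le_sum_abs _ _) (Finset.sum_le_sum ?_))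
    intro i hi
    have hij : i ≠ j := (Finset.mem_erase.mp hi).1
    rw [abs_mul]
    exact mul_le_mul (hj i (mem_univ i)) (hcoh i j hij) (abs_nonneg _) (abs_nonneg _)
  have hcard : (univ.erase j).card = p - 1 := by simp
  have hple : 1 ≤ p := j.pos
  have hbound : |g j| ≤ ((p : ℝ) - 1) * μ * |g j| := by
    have : ∑ i ∈ univ.erase j, |g j| * μ = ((p - 1 : ℕ) : ℝ) * (|g j| * μ) := by
      rw [Finset.sum_const, hcard, nsmul_eq_mul]
    rw [this] at habs
    have hcast : ((p - 1 : ℕ) : ℝ) = (p : ℝ) - 1 := by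
      rw [Nat.cast_sub hple]; norm_num
    rw [hcast] at habs
    linarith
  nlinarith [hjpos, hbound, hμ]
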